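/- With the Fock space operators a_i^± and H_i defined by the explicit action formulas on the basis of W_p, the Cartan–Kac relation ⟦a_i^-, a_i^+⟧ = (L_i - L_i^{-1})/(q - q^{-1}) holds, where ⟦a_i^-, a_i^+⟧ = a_i^- a_i^+ - (-1)^{θ_i} a_i^+ a_i^- and L_i acts on the basis vector |p;r) by multiplication by q^{p - (-1)^{θ_i} r_i - Σ_j r_j}. Equivalently, on each basis vector |p;r) the operator a_i^- a_i^+ - (-1)^{θ_i} a_i^+ a_i^- acts as the scalar [p - (-1)^{θ_i} r_i - Σ_j r_j]. -/
import Mathlib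


noncomputable section

/-- q-integer [x] = (q^x - q^{-x})/(q - q^{-1}). -/
def qb (q : ℝ) (x : ℤ) : ℝ := (q ^ x - q ^ (-x)) / (q - q⁻¹)

/-- q-factorial [x]! = [1][2]⋯[x]. -/
def qfact (q : ℝ) (x : ℕ) : ℝ := ∏ k ∈ Finset.Icc 1 x, qb q (k : ℤ)

/-- Free module on all tuples; the Fock space W_p is spanned by valid tuples. -/
abbrev Wp (N : ℕ) := (Fin N → ℕ) →₀ ℝ

/-- θ grading: 0 for the first n (bosonic) indices, 1 for the rest (fermionic). -/
def th (n : ℕ) {N : ℕ} (i : Fin N) : ℕ := if (i : ℕ) < n then 0 else 1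

/-- valid tuples: fermionic entries ≤ 1 and total sum ≤ p. -/
def valid (n : ℕ) {N : ℕ} (p : ℕ) (r : Fin N → ℕ) : Prop :=
  (∀ i : Fin N, n ≤ (i : ℕ) → r i ≤ 1) ∧ ∑ i, r i ≤ p

/-- sign (-1)^{θ_i (θ_1 r_1 + ⋯ + θ_{i-1} r_{i-1})}. -/
def sgn (n : ℕ) {N : ℕ} (i : Fin N) (r : Fin N → ℕ) : ℝ :=
  (-1 : ℝ) ^ (th n i * ∑ j ∈ Finset.univ.filter (fun j : Fin N => j < i), th n j * r j)

/-- r_1 + ⋯ + r_{i-1}. -/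
def Ssum {N : ℕ} (i : Fin N) (r : Fin N → ℕ) : ℕ :=
  ∑ j ∈ Finset.univ.filter (fun j : Fin N => j < i), r j

/-- creation operator a_i^+. -/
def aP (n : ℕ) {N : ℕ} (p : ℕ) (q : ℝ) (i : Fin N) : Wp N →ₗ[ℝ] Wp N :=
  Finsupp.lift (Wp N) ℝ (Fin N → ℕ) fun r =>
    (sgn n i r * q ^ (-(Ssum i r : ℤ)) * (1 - (th n i : ℝ) * (r i : ℝ)) *
      Real.sqrt (qb q ((r i : ℤ) + 1) * qb q ((p : ℤ) - ∑ l, (r l : ℤ)))) •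
      Finsupp.single (Function.update r i (r i + 1)) 1

/-- annihilation operator a_i^-. -/
def aM (n : ℕ) {N : ℕ} (p : ℕ) (q : ℝ) (i : Fin N) : Wp N →ₗ[ℝ] Wp N :=
  Finsupp.lift (Wp N) ℝ (Fin N → ℕ) fun r =>
    (sgn n i r * q ^ ((Ssum i r : ℤ)) *
      Real.sqrt (qb q (r i : ℤ) * qb q ((p : ℤ) - ∑ l, (r l : ℤ) + 1))) •
      Finsupp.single (Function.update r i (r i - 1)) 1

/-- Cartan operator H_i, diagonal on the basis. -/
def Hop (n : ℕ) {N : ℕ} (p : ℕ) (i : Fin N) : Wp N →ₗ[ℝ] Wp N :=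
  Finsupp.lift (Wp N) ℝ (Fin N → ℕ) fun r =>
    ((p : ℝ) - (-1 : ℝ) ^ th n i * (r i : ℝ) - ∑ j, (r j : ℝ)) • Finsupp.single r 1

lemma dne {q : ℝ} (hq : 0 < q) (hq1 : q ≠ 1) : q - q⁻¹ ≠ 0 := by
  intro h
  have h1 : q = q⁻¹ := sub_eq_zero.mp h
  have h2 : q * q = 1 := by nth_rewrite 2 [h1]; exact mul_inv_cancel₀ (ne_of_gt hq)
  have h3 : (q - 1) * (q + 1) = 0 := by nlinarith
  rcases mul_eq_zero.mp h3 with h' | h'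
  · exact hq1 (by linarith)
  · nlinarith

lemma qb_zero (q : ℝ) : qb q 0 = 0 := by simp [qb]

lemma qb_one {q : ℝ} (hq : 0 < q) (hq1 : q ≠ 1) : qb q 1 = 1 := by
  simp only [qb, zpow_one, zpow_neg_one]
  rw [div_self (dne hq hq1)]

lemma qb_nonneg {q : ℝ} (hq : 0 < q) (hq1 : q ≠ 1) {x : ℤ} (hx : 0 ≤ x) : 0 ≤ qb q x := by
  rcases lt_or_gt_of_ne hq1 with h | h
  · apply div_nonneg_of_nonpos
    · have := zpow_le_zpow_right_of_le_one₀ hq h.le (by linarith : -x ≤ x)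
      linarith
    · have : 1 < q⁻¹ := (one_lt_inv₀ hq).2 h
      linarith
  · apply div_nonneg
    · have := zpow_le_zpow_right₀ h.le (by linarith : -x ≤ x)
      linarith
    · have : q⁻¹ < 1 := inv_lt_one_of_one_lt₀ h
      linarith

lemma qb_identity {q : ℝ} (hq : 0 < q) (hq1 : q ≠ 1) (a b : ℤ) :
    qb q (a + 1) * qb q b - qb q a * qb q (b + 1) = qb q (b - a) := by
  have hq0 : q ≠ 0 := ne_of_gt hq
  have hd := dne hq hq1
  have hA : q ^ a ≠ 0 := zpow_ne_zero _ hq0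
  have hB : q ^ b ≠ 0 := zpow_ne_zero _ hq0
  have key : (q ^ (a+1) - q ^ (-(a+1))) * (q ^ b - q ^ (-b)) -
      (q ^ a - q ^ (-a)) * (q ^ (b+1) - q ^ (-(b+1))) =
      (q ^ (b-a) - q ^ (-(b-a))) * (q - q⁻¹) := by
    simp only [zpow_add₀ hq0, zpow_sub₀ hq0, zpow_neg, zpow_one, mul_inv, inv_inv, neg_add, neg_sub]
    field_simp
    ring
  simp only [qb, div_mul_div_comm, div_sub_div_same]
  rw [key, mul_div_mul_right _ _ hd]


lemma aP_single (n : ℕ) {N : ℕ} (p : ℕ) (q : ℝ) (i : Fin N) (r : Fin N → ℕ) :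
    aP n p q i (Finsupp.single r 1) =
    (sgn n i r * q ^ (-(Ssum i r : ℤ)) * (1 - (th n i : ℝ) * (r i : ℝ)) *
      Real.sqrt (qb q ((r i : ℤ) + 1) * qb q ((p : ℤ) - ∑ l, (r l : ℤ)))) •
      Finsupp.single (Function.update r i (r i + 1)) 1 := by
  simp [aP, Finsupp.lift_apply, Finsupp.sum_single_index]

lemma aM_single (n : ℕ) {N : ℕ} (p : ℕ) (q : ℝ) (i : Fin N) (r : Fin N → ℕ) :
    aM n p q i (Finsupp.single r 1) =
    (sgn n i r * q ^ ((Ssum i r : ℤ)) *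
      Real.sqrt (qb q (r i : ℤ) * qb q ((p : ℤ) - ∑ l, (r l : ℤ) + 1))) •
      Finsupp.single (Function.update r i (r i - 1)) 1 := by
  simp [aM, Finsupp.lift_apply, Finsupp.sum_single_index]

lemma Ssum_update {N : ℕ} (i : Fin N) (r : Fin N → ℕ) (v : ℕ) :
    Ssum i (Function.update r i v) = Ssum i r := by
  unfold Ssum
  apply Finset.sum_congr rfl
  intro j hj
  rw [Function.update_of_ne (ne_of_lt (Finset.mem_filter.mp hj).2)]

lemma sgn_update (n : ℕ) {N : ℕ} (i : Fin N) (r : Fin N → ℕ) (v : ℕ) :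
    sgn n i (Function.update r i v) = sgn n i r := by
  unfold sgn
  congr 2
  apply Finset.sum_congr rfl
  intro j hj
  rw [Function.update_of_ne (ne_of_lt (Finset.mem_filter.mp hj).2)]

lemma sum_update {N : ℕ} (i : Fin N) (r : Fin N → ℕ) (v : ℕ) :
    ∑ l, ((Function.update r i v) l : ℤ) = (∑ l, (r l : ℤ)) - r i + v := by
  have h1 : ∀ (f : Fin N → ℕ), ∑ l, (f l : ℤ) = (f i : ℤ) + ∑ l ∈ Finset.univ.erase i, (f l : ℤ) :=
    fun f => (Finset.add_sum_erase _ _ (Finset.mem_univ i)).symm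
  rw [h1, h1 r]
  have h2 : ∑ l ∈ Finset.univ.erase i, ((Function.update r i v) l : ℤ) =
      ∑ l ∈ Finset.univ.erase i, (r l : ℤ) := by
    apply Finset.sum_congr rfl
    intro j hj
    rw [Function.update_of_ne (Finset.ne_of_mem_erase hj)]
  rw [h2, Function.update_self]
  ring


lemma sgn_sq (n : ℕ) {N : ℕ} (i : Fin N) (r : Fin N → ℕ) :
    sgn n i r * sgn n i r = 1 := by
  unfold sgn
  rw [← pow_add]
  exact Even.neg_one_pow ⟨_, rfl⟩


/-- Cartan–Kac relation on Fock space: a_i^- a_i^+ - (-1)^{θ_i} a_i^+ a_i^-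
acts on the basis vector |p;r) as the scalar [p - (-1)^{θ_i} r_i - Σ_j r_j]. -/
theorem cartan_kac_fock (n m p : ℕ) (hn : 1 ≤ n) (hm : 1 ≤ m) (hp : 1 ≤ p)
    (q : ℝ) (hq : 0 < q) (hq1 : q ≠ 1) (i : Fin (n + m))
    (r : Fin (n + m) → ℕ) (hr : valid n p r) :
    aM n p q i (aP n p q i (Finsupp.single r 1)) -
        ((-1 : ℝ) ^ th n i) • aP n p q i (aM n p q i (Finsupp.single r 1)) =
      qb q ((p : ℤ) - (-1 : ℤ) ^ th n i * (r i : ℤ) - ∑ j, (r j : ℤ)) •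
        (Finsupp.single r 1 : Wp (n + m)) := by
  obtain ⟨hferm, hsum⟩ := hr
  have hq0 : q ≠ 0 := ne_of_gt hq
  have hSp : (∑ l, (r l : ℤ)) ≤ (p : ℤ) := by exact_mod_cast hsum
  have hri_le : (r i : ℤ) ≤ ∑ l, (r l : ℤ) := by
    exact_mod_cast Finset.single_le_sum (f := fun l => r l) (fun _ _ => Nat.zero_le _)
      (Finset.mem_univ i)
  have hz : q ^ (-(Ssum i r : ℤ)) * q ^ ((Ssum i r : ℤ)) = 1 := by
    rw [← zpow_add₀ hq0]; simp
  have hX : 0 ≤ qb q ((r i : ℤ) + 1) * qb q ((p : ℤ) - ∑ l, (r l : ℤ)) :=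
    mul_nonneg (qb_nonneg hq hq1 (by positivity)) (qb_nonneg hq hq1 (by omega))
  -- first composite
  have key1 : aM n p q i (aP n p q i (Finsupp.single r 1)) =
      ((1 - (th n i : ℝ) * (r i : ℝ)) *
        (qb q ((r i : ℤ) + 1) * qb q ((p : ℤ) - ∑ l, (r l : ℤ)))) •
        Finsupp.single r 1 := by
    rw [aP_single, map_smul, aM_single, smul_smul]
    rw [Ssum_update, sgn_update, sum_update, Function.update_self, Function.update_idem,
      Nat.add_sub_cancel, Function.update_eq_self]
    have e2 : (p : ℤ) - ((∑ l, (r l : ℤ)) - (r i : ℤ) + ((r i + 1 : ℕ) : ℤ)) + 1 =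
        (p : ℤ) - ∑ l, (r l : ℤ) := by push_cast; ring
    rw [e2]
    congr 1
    have hc : ((r i + 1 : ℕ) : ℤ) = (r i : ℤ) + 1 := by push_cast; ring
    rw [hc]
    have hsq := Real.mul_self_sqrt hX
    calc (sgn n i r * q ^ (-(Ssum i r : ℤ)) * (1 - (th n i : ℝ) * (r i : ℝ)) *
          Real.sqrt (qb q ((r i : ℤ) + 1) * qb q ((p : ℤ) - ∑ l, (r l : ℤ)))) *
          (sgn n i r * q ^ ((Ssum i r : ℤ)) *
          Real.sqrt (qb q ((r i : ℤ) + 1) * qb q ((p : ℤ) - ∑ l, (r l : ℤ))))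
        = (sgn n i r * sgn n i r) * (q ^ (-(Ssum i r : ℤ)) * q ^ ((Ssum i r : ℤ))) *
          (1 - (th n i : ℝ) * (r i : ℝ)) *
          (Real.sqrt (qb q ((r i : ℤ) + 1) * qb q ((p : ℤ) - ∑ l, (r l : ℤ))) *
           Real.sqrt (qb q ((r i : ℤ) + 1) * qb q ((p : ℤ) - ∑ l, (r l : ℤ)))) := by ring
      _ = _ := by rw [sgn_sq, hz, hsq]; ring
  have hX2 : 0 ≤ qb q (r i : ℤ) * qb q ((p : ℤ) - ∑ l, (r l : ℤ) + 1) :=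
    mul_nonneg (qb_nonneg hq hq1 (by positivity)) (qb_nonneg hq hq1 (by omega))
  rcases Nat.eq_zero_or_pos (r i) with hri0 | hri1
  · -- r i = 0 : second term vanishes
    have hz0 : (sgn n i r * q ^ ((Ssum i r : ℤ)) *
        Real.sqrt (qb q (r i : ℤ) * qb q ((p : ℤ) - ∑ l, (r l : ℤ) + 1))) = 0 := by
      rw [hri0]
      simp [qb_zero]
    rw [aM_single, hz0, zero_smul, map_zero, smul_zero, sub_zero, key1]
    congr 1
    rw [hri0]
    have e4 : (p : ℤ) - (-1 : ℤ) ^ th n i * ((0 : ℕ) : ℤ) - ∑ j, (r j : ℤ) =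
        (p : ℤ) - ∑ l, (r l : ℤ) := by push_cast; ring
    rw [e4]
    have e5 : ((0 : ℕ) : ℤ) + 1 = (1 : ℤ) := by norm_num
    rw [e5, qb_one hq hq1]
    push_cast
    ring
  · -- 1 ≤ r i
    have key2 : aP n p q i (aM n p q i (Finsupp.single r 1)) =
        ((1 - (th n i : ℝ) * ((r i : ℝ) - 1)) *
          (qb q (r i : ℤ) * qb q ((p : ℤ) - ∑ l, (r l : ℤ) + 1))) • Finsupp.single r 1 := by
      rw [aM_single, map_smul, aP_single, smul_smul]
      rw [Ssum_update, sgn_update, sum_update, Function.update_self, Function.update_idem]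
      have e0 : r i - 1 + 1 = r i := by omega
      rw [e0, Function.update_eq_self]
      have e1 : ((r i - 1 : ℕ) : ℤ) + 1 = (r i : ℤ) := by omega
      rw [e1]
      have e2 : (p : ℤ) - ((∑ l, (r l : ℤ)) - (r i : ℤ) + ((r i - 1 : ℕ) : ℤ)) =
          (p : ℤ) - ∑ l, (r l : ℤ) + 1 := by
        have h' : ((r i - 1 : ℕ) : ℤ) = (r i : ℤ) - 1 := by omega
        rw [h']; ring
      rw [e2]
      have e3 : ((r i - 1 : ℕ) : ℝ) = (r i : ℝ) - 1 := by
        have h' : ((r i - 1 : ℕ) : ℤ) = (r i : ℤ) - 1 := by omega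
        exact_mod_cast h'
      rw [e3]
      congr 1
      have hsq := Real.mul_self_sqrt hX2
      calc (sgn n i r * q ^ ((Ssum i r : ℤ)) *
            Real.sqrt (qb q (r i : ℤ) * qb q ((p : ℤ) - ∑ l, (r l : ℤ) + 1))) *
            (sgn n i r * q ^ (-(Ssum i r : ℤ)) * (1 - (th n i : ℝ) * ((r i : ℝ) - 1)) *
            Real.sqrt (qb q (r i : ℤ) * qb q ((p : ℤ) - ∑ l, (r l : ℤ) + 1)))
          = (sgn n i r * sgn n i r) * (q ^ (-(Ssum i r : ℤ)) * q ^ ((Ssum i r : ℤ))) *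
            (1 - (th n i : ℝ) * ((r i : ℝ) - 1)) *
            (Real.sqrt (qb q (r i : ℤ) * qb q ((p : ℤ) - ∑ l, (r l : ℤ) + 1)) *
             Real.sqrt (qb q (r i : ℤ) * qb q ((p : ℤ) - ∑ l, (r l : ℤ) + 1))) := by ring
        _ = _ := by rw [sgn_sq, hz, hsq]; ring
    rw [key1, key2, smul_smul, ← sub_smul]
    congr 1
    by_cases hi : (i : ℕ) < n
    · -- bosonic
      have hth : th n i = 0 := by simp [th, hi]
      rw [hth]
      have e6 : (p : ℤ) - (-1 : ℤ) ^ (0 : ℕ) * (r i : ℤ) - ∑ j, (r j : ℤ) =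
          ((p : ℤ) - ∑ l, (r l : ℤ)) - (r i : ℤ) := by ring
      rw [e6, ← qb_identity hq hq1 (r i : ℤ) ((p : ℤ) - ∑ l, (r l : ℤ))]
      push_cast
      ring
    · -- fermionic
      have hth : th n i = 1 := by simp [th, hi]
      have hri : r i = 1 := le_antisymm (hferm i (le_of_not_gt hi)) hri1
      rw [hth, hri]
      have e7 : (p : ℤ) - (-1 : ℤ) ^ (1 : ℕ) * ((1 : ℕ) : ℤ) - ∑ j, (r j : ℤ) =
          (p : ℤ) - ∑ l, (r l : ℤ) + 1 := by push_cast; ring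
      rw [e7]
      simp [qb_one hq hq1]
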